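/- arXiv:1705.03494 — 8 statements merged into one kernel-verified Lean document; each statement's English description precedes it below -/
import Mathlib

section
/- Let x = (x₀, …, x_{n−1}) ∈ ℝⁿ and suppose that for every j = 1, …, n the cyclic correlation sum ∑_{i=0}^{n−1} x_i · x_{(i+j−1) mod n} is nonnegative. Then the spectral norm of the circulant matrix C(x) equals |x₀ + x₁ + ⋯ + x_{n−1}|. -/
open scoped Matrix.Norms.L2Operator

theorem spectral_norm_circulant_of_nonneg_cyclic_correlations
    (n : ℕ) (x : Fin n → ℝ)
    (hx : ∀ j : Fin n, 0 ≤ ∑ i, x i * x (i + j)) :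
    ‖(Matrix.of fun i j : Fin n => x (j - i))‖ = |∑ i, x i| := by
  rcases Nat.eq_zero_or_pos n with hn | hn
  · subst hn
    have h0 : (Matrix.of fun i j : Fin 0 => x (j - i)) = 0 := by
      ext i j; exact i.elim0
    rw [h0, norm_zero]
    simp
  haveI : NeZero n := ⟨hn.ne'⟩
  set A : Matrix (Fin n) (Fin n) ℝ := Matrix.of fun i j : Fin n => x (j - i) with hA
  set s := ∑ i, x i with hs
  set r : Fin n → ℝ := fun t => ∑ i, x i * x (i + t) with hrdef
  have hr : ∀ t, 0 ≤ r t := hx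
  have hrs : ∑ t, r t = s ^ 2 := by
    rw [hrdef]
    rw [Finset.sum_comm]
    have h1 : ∀ i : Fin n, ∑ t, x i * x (i + t) = x i * s := by
      intro i
      rw [← Finset.mul_sum]
      congr 1
      exact Fintype.sum_equiv (Equiv.addLeft i) _ _ (fun t => rfl)
    simp_rw [h1]
    rw [← Finset.sum_mul, ← hs, sq]
  have hshift : ∀ j : Fin n, ∑ k, r (k - j) = s ^ 2 := by
    intro j
    rw [← hrs]
    exact Fintype.sum_equiv (Equiv.subRight j) _ _ (fun k => rfl)
  have hshift' : ∀ k : Fin n, ∑ j, r (k - j) = s ^ 2 := by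
    intro k
    rw [← hrs]
    exact Fintype.sum_equiv (Equiv.subLeft k) _ _ (fun j => rfl)
  have expand : ∀ v : Fin n → ℝ, ∑ i, (∑ j, x (j - i) * v j) ^ 2
      = ∑ j, ∑ k, r (k - j) * (v j * v k) := by
    intro v
    have h1 : ∀ i : Fin n, (∑ j, x (j - i) * v j) ^ 2
        = ∑ j, ∑ k, x (j - i) * x (k - i) * (v j * v k) := by
      intro i
      rw [sq, Finset.sum_mul_sum]
      exact Finset.sum_congr rfl fun j _ => Finset.sum_congr rfl fun k _ => by ring
    simp_rw [h1]
    rw [Finset.sum_comm]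
    refine Finset.sum_congr rfl fun j _ => ?_
    rw [Finset.sum_comm]
    refine Finset.sum_congr rfl fun k _ => ?_
    rw [← Finset.sum_mul]
    congr 1
    rw [hrdef]
    refine Fintype.sum_equiv (Equiv.subLeft j) _ _ (fun i => ?_)
    have e2 : (j - i) + (k - j) = k - i := by abel
    show x (j - i) * x (k - i) = x (j - i) * x ((j - i) + (k - j))
    rw [e2]
  have key : ∀ v : Fin n → ℝ, ∑ i, (∑ j, x (j - i) * v j) ^ 2 ≤ s ^ 2 * ∑ j, v j ^ 2 := by
    intro v
    rw [expand v]
    have step1 : ∑ j, ∑ k, r (k - j) * (v j * v k)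
        ≤ ∑ j, ∑ k, r (k - j) * ((v j ^ 2 + v k ^ 2) / 2) := by
      refine Finset.sum_le_sum fun j _ => Finset.sum_le_sum fun k _ => ?_
      refine mul_le_mul_of_nonneg_left ?_ (hr _)
      nlinarith [sq_nonneg (v j - v k)]
    refine step1.trans (le_of_eq ?_)
    have hsplit : ∀ j k : Fin n, r (k - j) * ((v j ^ 2 + v k ^ 2) / 2)
        = r (k - j) * v j ^ 2 / 2 + r (k - j) * v k ^ 2 / 2 := fun j k => by ring
    simp_rw [hsplit, Finset.sum_add_distrib]
    have hAsum : ∑ j, ∑ k, r (k - j) * v j ^ 2 / 2 = s ^ 2 * (∑ j, v j ^ 2) / 2 := by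
      have h1 : ∀ j : Fin n, ∑ k, r (k - j) * v j ^ 2 / 2 = s ^ 2 * v j ^ 2 / 2 := by
        intro j
        rw [← Finset.sum_div, ← Finset.sum_mul, hshift j]
      simp_rw [h1]
      rw [← Finset.sum_div, ← Finset.mul_sum]
    have hBsum : ∑ j, ∑ k, r (k - j) * v k ^ 2 / 2 = s ^ 2 * (∑ j, v j ^ 2) / 2 := by
      rw [Finset.sum_comm]
      have h1 : ∀ k : Fin n, ∑ j, r (k - j) * v k ^ 2 / 2 = s ^ 2 * v k ^ 2 / 2 := by
        intro k
        rw [← Finset.sum_div, ← Finset.sum_mul, hshift' k]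
      simp_rw [h1]
      rw [← Finset.sum_div, ← Finset.mul_sum]
    rw [hAsum, hBsum]
    ring
  have hones : ∀ i : Fin n, ∑ j, x (j - i) = s := by
    intro i
    rw [hs]
    exact Fintype.sum_equiv (Equiv.subRight i) _ _ (fun j => rfl)
  have upper : ‖A‖ ≤ |s| := by
    rw [Matrix.l2_opNorm_def]
    refine ContinuousLinearMap.opNorm_le_bound _ (abs_nonneg s) ?_
    intro v
    show ‖(Matrix.toEuclideanLin A) v‖ ≤ |s| * ‖v‖
    have happ : ∀ i : Fin n, (Matrix.toEuclideanLin A) v i = ∑ j, x (j - i) * v j := by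
      intro i
      rw [Matrix.toEuclideanLin_apply]
      simp [Matrix.mulVec, dotProduct, hA]
    have hv : ‖v‖ = Real.sqrt (∑ i, v i ^ 2) := by
      rw [EuclideanSpace.norm_eq]
      simp_rw [Real.norm_eq_abs, sq_abs]
    calc ‖(Matrix.toEuclideanLin A) v‖
        = Real.sqrt (∑ i, (∑ j, x (j - i) * v j) ^ 2) := by
          rw [EuclideanSpace.norm_eq]
          simp_rw [happ, Real.norm_eq_abs, sq_abs]
      _ ≤ Real.sqrt (s ^ 2 * ∑ j, v j ^ 2) := Real.sqrt_le_sqrt (key _)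
      _ = |s| * Real.sqrt (∑ j, v j ^ 2) := by
          rw [Real.sqrt_mul (sq_nonneg s), Real.sqrt_sq_eq_abs]
      _ = |s| * ‖v‖ := by rw [hv]
  have lower : |s| ≤ ‖A‖ := by
    have h := Matrix.l2_opNorm_mulVec A ((WithLp.equiv 2 (Fin n → ℝ)).symm (fun _ => 1))
    have hAv : A.mulVec ((WithLp.equiv 2 (Fin n → ℝ)).symm (fun _ => 1)) = fun _ => s := by
      funext i
      simp [Matrix.mulVec, dotProduct, hA, hones i]
    rw [hAv] at h
    have hnorm1 : ‖((WithLp.equiv 2 (Fin n → ℝ)).symm (fun _ => 1) : EuclideanSpace ℝ (Fin n))‖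
        = Real.sqrt n := by
      rw [EuclideanSpace.norm_eq]
      simp
    have hnorm2 : ‖((EuclideanSpace.equiv (Fin n) ℝ).symm (fun _ => s) : EuclideanSpace ℝ (Fin n))‖
        = |s| * Real.sqrt n := by
      have hid : ((EuclideanSpace.equiv (Fin n) ℝ).symm (fun _ => s) : EuclideanSpace ℝ (Fin n))
          = (WithLp.equiv 2 (Fin n → ℝ)).symm (fun _ => s) := rfl
      rw [hid, EuclideanSpace.norm_eq]
      simp_rw [WithLp.equiv_symm_apply, Real.norm_eq_abs]
      rw [Finset.sum_const, Finset.card_univ, Fintype.card_fin, nsmul_eq_mul,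
        Real.sqrt_mul (by positivity), Real.sqrt_sq_eq_abs, abs_abs, mul_comm]
    rw [hnorm1, hnorm2] at h
    have hsq : (0:ℝ) < Real.sqrt n := Real.sqrt_pos.mpr (by exact_mod_cast hn)
    exact le_of_mul_le_mul_right h hsq
  exact le_antisymm upper lower
end

section
/- Let (h_n) be the Horadam sequence with h₀ = a, h₁ = b, and h_n = p·h_{n−1} + q·h_{n−2}, where p + q = 1 and p ≠ 2 (so q ≠ −1). Then for every n ≥ 1, h₀ + ⋯ + h_{n−1} = (q·h_{n−1} + (n−1)·(q·a + b) + a) / (q + 1). -/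
theorem horadam_sum_of_p_add_q_eq_one
    (a b p q : ℤ) (hpq : p + q = 1) (hp : p ≠ 2)
    (h : ℕ → ℤ) (h0 : h 0 = a) (h1 : h 1 = b)
    (hrec : ∀ m : ℕ, h (m + 2) = p * h (m + 1) + q * h m)
    (n : ℕ) (hn : 1 ≤ n) :
    (∑ k ∈ Finset.range n, (h k : ℚ)) =
      (q * h (n - 1) + ((n : ℚ) - 1) * (q * a + b) + a) / (q + 1) := by
  have hq1 : (q : ℚ) + 1 ≠ 0 := by
    have : q + 1 ≠ 0 := by omega
    exact_mod_cast this
  have key : ∀ m : ℕ, h (m + 1) + q * h m = q * a + b := by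
    intro m
    induction m with
    | zero => rw [h0, h1]; ring
    | succ k ih =>
      rw [hrec k]
      linear_combination ih + h (k + 1) * hpq
  induction n with
  | zero => omega
  | succ m ih =>
    rcases Nat.eq_zero_or_pos m with hm | hm
    · subst hm
      simp [h0]
      field_simp
    · rw [Finset.sum_range_succ, ih hm]
      have hkey : ∃ k, m = k + 1 := ⟨m - 1, by omega⟩
      obtain ⟨k, rfl⟩ := hkey
      simp only [Nat.add_sub_cancel]
      have hk : (h (k + 1) : ℚ) + q * h k = q * a + b := by exact_mod_cast key k
      field_simp
      push_cast
      nlinarith [hk]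
end

section
/- Let a, b, p, q be integers with p + q ≠ 1, and let (h_n) be the Horadam sequence h₀ = a, h₁ = b, h_n = p·h_{n−1} + q·h_{n−2}. Assume h₀, …, h_{n−1} are all nonnegative. Then the spectral norm of the circulant matrix C(h₀, …, h_{n−1}) equals (h_n + q·h_{n−1} + (p−1)·a − b) / (p + q − 1). -/
open scoped Matrix.Norms.L2Operator
open Matrix

theorem spectral_norm_circulant_horadam
    (a b p q : ℤ) (hpq : p + q ≠ 1)
    (h : ℕ → ℤ) (h0 : h 0 = a) (h1 : h 1 = b)
    (hrec : ∀ m : ℕ, h (m + 2) = p * h (m + 1) + q * h m)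
    (n : ℕ) (hn : 1 ≤ n)
    (hnonneg : ∀ k < n, 0 ≤ h k) :
    ‖(Matrix.of fun i j : Fin n => (h ((j - i : Fin n) : ℕ) : ℝ))‖ =
      ((h n : ℝ) + q * h (n - 1) + (p - 1) * a - b) / (p + q - 1) := by
  haveI : NeZero n := ⟨by omega⟩
  -- telescoping identity
  have key : ∀ m : ℕ, 1 ≤ m →
      (h m : ℤ) + q * h (m - 1) + (p - 1) * a - b
        = (p + q - 1) * ∑ k ∈ Finset.range m, h k := by
    intro m hm
    induction m with
    | zero => omega
    | succ m ih =>
      rcases Nat.eq_or_lt_of_le hm with hm1 | hm1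
      · simp [← hm1, h0, h1]; ring
      · have hm' : 1 ≤ m := by omega
        have ihm := ih hm'
        have e1 : m - 1 + 2 = m + 1 := by omega
        have e2 : m - 1 + 1 = m := by omega
        have hrec' := hrec (m - 1)
        rw [e1, e2] at hrec'
        rw [Finset.sum_range_succ, Nat.add_sub_cancel, hrec']
        linarith [ihm]
  set S : ℝ := ∑ k : Fin n, (h (k : ℕ) : ℝ) with hS
  have hSnn : 0 ≤ S := Finset.sum_nonneg fun k _ => by
    exact_mod_cast hnonneg k k.isLt
  set A : Matrix (Fin n) (Fin n) ℝ :=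
    Matrix.of fun i j : Fin n => (h ((j - i : Fin n) : ℕ) : ℝ) with hA
  have hann : ∀ i j : Fin n, (0 : ℝ) ≤ A i j := fun i j => by
    show (0:ℝ) ≤ (h ((j - i : Fin n) : ℕ) : ℝ)
    exact_mod_cast hnonneg _ (j - i).isLt
  -- row sums
  have hrow : ∀ i : Fin n, ∑ j : Fin n, A i j = S := by
    intro i
    exact Fintype.sum_equiv (Equiv.subRight i) _ _ (fun j => rfl)
  -- column sums
  have hcol : ∀ j : Fin n, ∑ i : Fin n, A i j = S := by
    intro j
    exact Fintype.sum_equiv (Equiv.subLeft j) _ _ (fun i => rfl)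
  have hnorm : ‖A‖ = S := by
    apply le_antisymm
    · rw [Matrix.l2_opNorm_def]
      apply ContinuousLinearMap.opNorm_le_bound _ hSnn
      intro x
      simp only [LinearEquiv.trans_apply, LinearMap.coe_toContinuousLinearMap']
      rw [Matrix.toEuclideanLin_apply]
      rw [EuclideanSpace.norm_eq]
      have hxn : ‖x‖ = Real.sqrt (∑ j : Fin n, ((WithLp.equiv 2 (Fin n → ℝ)) x j) ^ 2) := by
        rw [EuclideanSpace.norm_eq]
        congr 1; apply Finset.sum_congr rfl; intro j _
        rw [Real.norm_eq_abs, sq_abs]; rfl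
      set y := (WithLp.equiv 2 (Fin n → ℝ)) x with hy
      have step : ∀ i : Fin n, ((A *ᵥ y) i) ^ 2 ≤ S * ∑ j : Fin n, A i j * y j ^ 2 := by
        intro i
        have cs := Finset.sum_mul_sq_le_sq_mul_sq Finset.univ
          (fun j => Real.sqrt (A i j)) (fun j => Real.sqrt (A i j) * y j)
        have e1 : ∀ j : Fin n, Real.sqrt (A i j) * (Real.sqrt (A i j) * y j) = A i j * y j := by
          intro j
          rw [← mul_assoc, Real.mul_self_sqrt (hann i j)]
        have e2 : ∀ j : Fin n, Real.sqrt (A i j) ^ 2 = A i j := fun j =>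
          Real.sq_sqrt (hann i j)
        have e3 : ∀ j : Fin n, (Real.sqrt (A i j) * y j) ^ 2 = A i j * y j ^ 2 := by
          intro j; rw [mul_pow, e2]
        simp only [e1, e2, e3] at cs
        calc ((A *ᵥ y) i) ^ 2 = (∑ j : Fin n, A i j * y j) ^ 2 := rfl
          _ ≤ (∑ j : Fin n, A i j) * ∑ j : Fin n, A i j * y j ^ 2 := cs
          _ = S * ∑ j : Fin n, A i j * y j ^ 2 := by rw [hrow i]
      have sum_step : ∑ i : Fin n, ((A *ᵥ y) i) ^ 2 ≤ (S * ‖x‖) ^ 2 := by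
        calc ∑ i : Fin n, ((A *ᵥ y) i) ^ 2
            ≤ ∑ i : Fin n, S * ∑ j : Fin n, A i j * y j ^ 2 :=
              Finset.sum_le_sum fun i _ => step i
          _ = S * ∑ j : Fin n, (∑ i : Fin n, A i j) * y j ^ 2 := by
              rw [← Finset.mul_sum]
              congr 1
              rw [Finset.sum_comm]
              exact Finset.sum_congr rfl fun j _ => (Finset.sum_mul _ _ _).symm
          _ = S * (S * ∑ j : Fin n, y j ^ 2) := by
              congr 1
              simp only [hcol]
              rw [Finset.mul_sum]
          _ = (S * ‖x‖) ^ 2 := by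
              rw [hxn, mul_pow, Real.sq_sqrt (Finset.sum_nonneg fun j _ => sq_nonneg _)]
              ring
      calc Real.sqrt (∑ i : Fin n, ‖(WithLp.equiv 2 (Fin n → ℝ)).symm (A *ᵥ y) i‖ ^ 2)
          = Real.sqrt (∑ i : Fin n, ((A *ᵥ y) i) ^ 2) := by
            congr 1; apply Finset.sum_congr rfl; intro i _
            rw [Real.norm_eq_abs, sq_abs]; rfl
        _ ≤ Real.sqrt ((S * ‖x‖) ^ 2) := Real.sqrt_le_sqrt sum_step
        _ = S * ‖x‖ := Real.sqrt_sq (mul_nonneg hSnn (norm_nonneg _))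
    · -- lower bound via all-ones vector
      set x : EuclideanSpace ℝ (Fin n) := (WithLp.equiv 2 (Fin n → ℝ)).symm (fun _ => 1) with hx
      have hxnorm : ‖x‖ = Real.sqrt n := by
        rw [EuclideanSpace.norm_eq]
        rw [show (∑ i : Fin n, ‖x i‖ ^ 2) = (n : ℝ) by
          simp [show ∀ i : Fin n, x i = 1 from fun _ => rfl]]
      have hAx : A *ᵥ (fun _ => (1:ℝ)) = fun i => S := by
        funext i
        simp only [Matrix.mulVec, dotProduct, mul_one]
        exact hrow i
      have hle := Matrix.l2_opNorm_mulVec A x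
      have hTx : ‖(EuclideanSpace.equiv (Fin n) ℝ).symm (A *ᵥ x)‖ = S * Real.sqrt n := by
        have hptwise : ∀ i : Fin n, ‖(EuclideanSpace.equiv (Fin n) ℝ).symm (A *ᵥ x) i‖ = S := by
          intro i
          have hv : (EuclideanSpace.equiv (Fin n) ℝ).symm (A *ᵥ x) i = S := congrFun hAx i
          rw [hv, Real.norm_eq_abs, abs_of_nonneg hSnn]
        rw [EuclideanSpace.norm_eq]
        simp only [hptwise]
        rw [Finset.sum_const, Finset.card_univ, Fintype.card_fin, nsmul_eq_mul,
          Real.sqrt_mul (by positivity), Real.sqrt_sq hSnn]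
        ring
      rw [hTx, hxnorm] at hle
      have hn0 : (0:ℝ) < Real.sqrt n := Real.sqrt_pos.mpr (by exact_mod_cast Nat.pos_of_ne_zero (by omega))
      exact le_of_mul_le_mul_right hle hn0
  rw [hnorm]
  have keyn := key n hn
  have hpq' : (p : ℝ) + q - 1 ≠ 0 := by
    intro hc
    apply hpq
    have : ((p + q : ℤ) : ℝ) = ((1:ℤ):ℝ) := by push_cast; linarith
    exact_mod_cast this
  have hsum : ((h n : ℝ) + q * h (n - 1) + (p - 1) * a - b)
      = (p + q - 1) * ∑ k ∈ Finset.range n, (h k : ℝ) := by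
    exact_mod_cast keyn
  rw [hsum, mul_comm, mul_div_assoc, div_self hpq', mul_one, hS]
  exact Fin.sum_univ_eq_sum_range (fun k => ((h k : ℝ))) n
end

section
/- Let F_k denote the Fibonacci numbers (F₀ = 0, F₁ = 1, F_k = F_{k−1} + F_{k−2}). The spectral norm of the n×n circulant matrix C(F₀, F₁, …, F_{n−1}) equals F_{n+1} − 1. -/
open scoped Matrix.Norms.L2Operator
open Finset
open scoped Matrix

lemma l2norm_eq_of_rowcol (n : ℕ) (hn : 1 ≤ n) (A : Matrix (Fin n) (Fin n) ℝ) (r : ℝ)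
    (hpos : ∀ i j, 0 ≤ A i j) (hrow : ∀ i, ∑ j, A i j = r)
    (hcol : ∀ j, ∑ i, A i j = r) : ‖A‖ = r := by
  have i0 : Fin n := ⟨0, hn⟩
  have hr0 : 0 ≤ r := (hrow i0) ▸ Finset.sum_nonneg fun j _ => hpos i0 j
  apply le_antisymm
  · rw [Matrix.l2_opNorm_def]
    apply ContinuousLinearMap.opNorm_le_bound _ hr0
    intro x
    simp only [LinearEquiv.trans_apply, LinearMap.coe_toContinuousLinearMap']
    rw [Matrix.toEuclideanLin_apply]
    set y : Fin n → ℝ := (WithLp.equiv 2 (Fin n → ℝ)) x with hy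
    have hnx : ‖x‖ = Real.sqrt (∑ j, y j ^ 2) := by
      rw [EuclideanSpace.norm_eq]
      congr 1
      refine Finset.sum_congr rfl fun j _ => ?_
      rw [Real.norm_eq_abs, sq_abs]
      rfl
    have hnAx : ‖(WithLp.equiv 2 (Fin n → ℝ)).symm (A *ᵥ y)‖
        = Real.sqrt (∑ i, (∑ j, A i j * y j) ^ 2) := by
      rw [EuclideanSpace.norm_eq]
      congr 1
      refine Finset.sum_congr rfl fun i _ => ?_
      rw [Real.norm_eq_abs, sq_abs]
      rfl
    rw [show ‖WithLp.toLp 2 (A *ᵥ x.ofLp)‖ = _ from hnAx, hnx]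
    rw [← Real.sqrt_sq hr0, ← Real.sqrt_mul (sq_nonneg r)]
    apply Real.sqrt_le_sqrt
    calc ∑ i, (∑ j, A i j * y j) ^ 2
        ≤ ∑ i, (∑ j, A i j) * (∑ j, A i j * y j ^ 2) := by
          refine Finset.sum_le_sum fun i _ => ?_
          refine Finset.sum_sq_le_sum_mul_sum_of_sq_eq_mul _
            (fun j _ => hpos i j) (fun j _ => mul_nonneg (hpos i j) (sq_nonneg _))
            (fun j _ => by ring)
      _ = r * ∑ i, ∑ j, A i j * y j ^ 2 := by
          rw [Finset.mul_sum]
          exact Finset.sum_congr rfl fun i _ => by rw [hrow i]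
      _ = r * ∑ j, (∑ i, A i j) * y j ^ 2 := by
          rw [Finset.sum_comm]
          congr 1
          exact Finset.sum_congr rfl fun j _ => by rw [Finset.sum_mul]
      _ = r ^ 2 * ∑ j, y j ^ 2 := by
          simp only [hcol]
          rw [Finset.mul_sum, Finset.mul_sum]
          exact Finset.sum_congr rfl fun j _ => by ring
  · set v : EuclideanSpace ℝ (Fin n) := (WithLp.equiv 2 (Fin n → ℝ)).symm (fun _ => 1) with hv
    have hAv : A *ᵥ ((WithLp.equiv 2 (Fin n → ℝ)) v) = fun _ => r := by
      funext i
      simpa [Matrix.mulVec, dotProduct, hv] using hrow i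
    have hnv : ‖v‖ = Real.sqrt n := by
      simp [hv, EuclideanSpace.norm_eq]
    have hnAv : ‖(WithLp.equiv 2 (Fin n → ℝ)).symm (A *ᵥ (WithLp.equiv 2 (Fin n → ℝ)) v)‖
        = r * Real.sqrt n := by
      have hh : ‖(WithLp.equiv 2 (Fin n → ℝ)).symm (fun _ : Fin n => r)‖
          = Real.sqrt (∑ _i : Fin n, r ^ 2) := by
        rw [EuclideanSpace.norm_eq]
        congr 1
        exact Finset.sum_congr rfl fun i _ => by rw [Real.norm_eq_abs, sq_abs]; rfl
      rw [hAv, hh]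
      rw [Finset.sum_const, Finset.card_univ, Fintype.card_fin, nsmul_eq_mul,
        Real.sqrt_mul (by positivity : (0:ℝ) ≤ (n:ℝ)), Real.sqrt_sq hr0, mul_comm]
    have hle' : r * Real.sqrt n ≤ ‖A‖ * Real.sqrt n := by
      rw [← hnAv, ← hnv]
      exact Matrix.l2_opNorm_mulVec A _
    have hsn : (0:ℝ) < Real.sqrt n := Real.sqrt_pos.mpr (by exact_mod_cast hn)
    exact le_of_mul_le_mul_right hle' hsn

theorem spectral_norm_circulant_fibonacci (n : ℕ) (hn : 1 ≤ n) :
    ‖(Matrix.of fun i j : Fin n => (Nat.fib ((j - i : Fin n) : ℕ) : ℝ))‖ =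
      (Nat.fib (n + 1) : ℝ) - 1 := by
  haveI : NeZero n := ⟨Nat.one_le_iff_ne_zero.mp hn⟩
  have hsum : ∑ k : Fin n, (Nat.fib k : ℝ) = (Nat.fib (n + 1) : ℝ) - 1 := by
    rw [Fin.sum_univ_eq_sum_range (fun k => (Nat.fib k : ℝ)) n]
    have := Nat.fib_succ_eq_succ_sum n
    have : ((Nat.fib (n + 1) : ℕ) : ℝ) = (∑ k ∈ Finset.range n, (Nat.fib k : ℝ)) + 1 := by
      rw [this]; push_cast; ring
    linarith
  apply l2norm_eq_of_rowcol n hn _ _ (fun i j => Nat.cast_nonneg _)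
  · intro i
    rw [← hsum]
    exact Fintype.sum_equiv (Equiv.subRight i) _ _ (fun j => rfl)
  · intro j
    rw [← hsum]
    exact Fintype.sum_equiv (Equiv.subLeft j) _ _ (fun i => rfl)
end

section
/- Let L_k denote the Lucas numbers (L₀ = 2, L₁ = 1, L_k = L_{k−1} + L_{k−2}) and F_k the Fibonacci numbers. The spectral norm of the n×n circulant matrix C(L₀, L₁, …, L_{n−1}) equals F_{n+2} + F_n − 1. -/
open scoped Matrix.Norms.L2Operator

open Finset Matrix in
lemma aux_opnorm (n : ℕ) (hn : 1 ≤ n) (A : Matrix (Fin n) (Fin n) ℝ) (s : ℝ)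
    (hpos : ∀ i j, 0 ≤ A i j) (hrow : ∀ i, ∑ j, A i j = s)
    (hcol : ∀ j, ∑ i, A i j = s) : ‖A‖ = s := by
  have : NeZero n := ⟨by omega⟩
  have hs0 : 0 ≤ s := by
    rw [← hrow 0]
    exact Finset.sum_nonneg fun j _ => hpos 0 j
  have key : ∀ x : EuclideanSpace ℝ (Fin n), ∑ i, (A *ᵥ (x : Fin n → ℝ)) i ^ 2 ≤ s ^ 2 * ∑ j, x j ^ 2 := by
    intro x
    have step : ∀ i, (A *ᵥ (x : Fin n → ℝ)) i ^ 2 ≤ s * ∑ j, A i j * x j ^ 2 := by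
      intro i
      have cs := Finset.sum_mul_sq_le_sq_mul_sq (Finset.univ : Finset (Fin n))
        (fun j => Real.sqrt (A i j)) (fun j => Real.sqrt (A i j) * x j)
      have e1 : ∀ j : Fin n, Real.sqrt (A i j) * (Real.sqrt (A i j) * x j) = A i j * x j := by
        intro j; rw [← mul_assoc, Real.mul_self_sqrt (hpos i j)]
      have e2 : ∀ j : Fin n, Real.sqrt (A i j) ^ 2 = A i j := fun j => Real.sq_sqrt (hpos i j)
      have e3 : ∀ j : Fin n, (Real.sqrt (A i j) * x j) ^ 2 = A i j * x j ^ 2 := by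
        intro j; rw [mul_pow, Real.sq_sqrt (hpos i j)]
      simp only [e1, e2, e3, hrow i] at cs
      simpa [Matrix.mulVec, dotProduct] using cs
    calc ∑ i, (A *ᵥ (x : Fin n → ℝ)) i ^ 2 ≤ ∑ i, s * ∑ j, A i j * x j ^ 2 :=
          Finset.sum_le_sum fun i _ => step i
      _ = s * ∑ j, (∑ i, A i j) * x j ^ 2 := by
          rw [← Finset.mul_sum, Finset.sum_comm]
          congr 1; refine Finset.sum_congr rfl fun j _ => ?_
          rw [Finset.sum_mul]
      _ = s ^ 2 * ∑ j, x j ^ 2 := by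
          simp_rw [hcol]
          rw [← Finset.mul_sum, ← mul_assoc, sq]
  apply le_antisymm
  · rw [Matrix.l2_opNorm_def]
    apply ContinuousLinearMap.opNorm_le_bound _ hs0
    intro x
    have hx : ((Matrix.toEuclideanLin.trans LinearMap.toContinuousLinearMap A) x : EuclideanSpace ℝ (Fin n))
        = (WithLp.equiv 2 (Fin n → ℝ)).symm (A *ᵥ (WithLp.equiv 2 _ x)) := rfl
    rw [hx]
    rw [EuclideanSpace.norm_eq, EuclideanSpace.norm_eq]
    rw [← Real.sqrt_sq hs0, ← Real.sqrt_mul (sq_nonneg s)]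
    apply Real.sqrt_le_sqrt
    simpa [Real.norm_eq_abs, sq_abs] using key x
  · -- lower bound via all-ones vector
    set x : EuclideanSpace ℝ (Fin n) := (WithLp.equiv 2 (Fin n → ℝ)).symm (fun _ => 1) with hxdef
    have h1 := Matrix.l2_opNorm_mulVec A x
    have hx_norm : ‖x‖ = Real.sqrt n := by
      rw [EuclideanSpace.norm_eq]
      simp [hxdef]
    have hAx_norm : ‖(EuclideanSpace.equiv (Fin n) ℝ).symm (A *ᵥ x)‖ = s * Real.sqrt n := by
      rw [EuclideanSpace.norm_eq]
      have he : ∀ i : Fin n, ((EuclideanSpace.equiv (Fin n) ℝ).symm (A *ᵥ x)) i = s := by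
        intro i
        show (A *ᵥ x) i = s
        rw [← hrow i]
        simp [hxdef, Matrix.mulVec, dotProduct]
      simp_rw [he]
      rw [Finset.sum_const, Finset.card_univ, Fintype.card_fin, nsmul_eq_mul,
        Real.sqrt_mul (by positivity), Real.norm_eq_abs, sq_abs, Real.sqrt_sq hs0, mul_comm]
    rw [hAx_norm, hx_norm] at h1
    have hn0 : (0 : ℝ) < Real.sqrt n := Real.sqrt_pos.2 (by exact_mod_cast hn)
    exact le_of_mul_le_mul_right h1 hn0

theorem spectral_norm_circulant_lucas
    (L : ℕ → ℕ) (hL0 : L 0 = 2) (hL1 : L 1 = 1)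
    (hLrec : ∀ m : ℕ, L (m + 2) = L (m + 1) + L m)
    (n : ℕ) (hn : 1 ≤ n) :
    ‖(Matrix.of fun i j : Fin n => (L ((j - i : Fin n) : ℕ) : ℝ))‖ =
      (Nat.fib (n + 2) : ℝ) + Nat.fib n - 1 := by
  have : NeZero n := ⟨by omega⟩
  -- Lucas in terms of Fibonacci
  have lfib : ∀ m : ℕ, L (m + 1) = Nat.fib m + Nat.fib (m + 2) := by
    have h : ∀ m : ℕ, L (m + 1) = Nat.fib m + Nat.fib (m + 2) ∧
        L (m + 2) = Nat.fib (m + 1) + Nat.fib (m + 3) := by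
      intro m
      induction m with
      | zero => constructor <;> simp [hL1, hLrec 0, hL0, Nat.fib]
      | succ k ih =>
        refine ⟨ih.2, ?_⟩
        rw [hLrec (k + 1), ih.1, ih.2]
        have e1 := Nat.fib_add_two (n := k + 2)
        have e2 := Nat.fib_add_two (n := k + 1)
        have e3 := Nat.fib_add_two (n := k)
        ring_nf at e1 e2 e3 ⊢
        omega
    exact fun m => (h m).1
  have sumL : ∀ m : ℕ, (∑ k ∈ Finset.range m, L k) + 1 = L (m + 1) := by
    intro m
    induction m with
    | zero => simp [hL1]
    | succ k ih =>
      rw [Finset.sum_range_succ, hLrec k, ← ih]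
      ring
  set s : ℝ := ∑ k ∈ Finset.range n, (L k : ℝ) with hs
  have hnorm : ‖(Matrix.of fun i j : Fin n => (L ((j - i : Fin n) : ℕ) : ℝ))‖ = s := by
    have hfin : ∀ (f : ℕ → ℝ), ∑ k : Fin n, f (k : ℕ) = ∑ k ∈ Finset.range n, f k :=
      fun f => Fin.sum_univ_eq_sum_range _ _
    apply aux_opnorm n hn _ s
    · intro i j
      exact Nat.cast_nonneg _
    · intro i
      rw [hs, ← hfin fun k => (L k : ℝ)]
      exact Fintype.sum_equiv (Equiv.subRight i) _ _ (fun j => rfl)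
    · intro j
      rw [hs, ← hfin fun k => (L k : ℝ)]
      exact Fintype.sum_equiv (Equiv.subLeft j) _ _ (fun i => rfl)
  rw [hnorm]
  have h1 : (∑ k ∈ Finset.range n, L k) + 1 = Nat.fib n + Nat.fib (n + 2) := by
    rw [sumL n, lfib n]
  have h2 : ((∑ k ∈ Finset.range n, L k : ℕ) : ℝ) + 1 = Nat.fib n + Nat.fib (n + 2) := by
    exact_mod_cast congrArg (Nat.cast : ℕ → ℝ) h1
  rw [hs]
  push_cast at h2 ⊢
  linarith
end

section
/- Let p, q ≥ 1 be integers and (f̃_n) defined by f̃₀ = 0, f̃₁ = 1, f̃_n = p·f̃_{n−1} + q·f̃_{n−2}. Then the spectral norm of the circulant matrix C(f̃₀, …, f̃_{n−1}) equals (f̃_n + q·f̃_{n−1} − 1) / (p + q − 1). -/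
open scoped Matrix.Norms.L2Operator

theorem spectral_norm_circulant_generalized_fibonacci
    (p q : ℤ) (hp : 1 ≤ p) (hq : 1 ≤ q)
    (f : ℕ → ℤ) (hf0 : f 0 = 0) (hf1 : f 1 = 1)
    (hfrec : ∀ m : ℕ, f (m + 2) = p * f (m + 1) + q * f m)
    (n : ℕ) (hn : 1 ≤ n) :
    ‖(Matrix.of fun i j : Fin n => (f ((j - i : Fin n) : ℕ) : ℝ))‖ =
      ((f n : ℝ) + q * f (n - 1) - 1) / (p + q - 1) := by
  haveI : NeZero n := ⟨by omega⟩
  -- nonnegativity of f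
  have hnn : ∀ k, (0 : ℤ) ≤ f k := by
    have key : ∀ k, 0 ≤ f k ∧ 0 ≤ f (k + 1) := by
      intro k
      induction k with
      | zero => simp [hf0, hf1]
      | succ m ih =>
        refine ⟨ih.2, ?_⟩
        rw [hfrec]
        nlinarith [ih.1, ih.2]
    exact fun k => (key k).1
  set M : Matrix (Fin n) (Fin n) ℝ :=
    Matrix.of fun i j : Fin n => (f ((j - i : Fin n) : ℕ) : ℝ) with hM
  set S : ℝ := ∑ k : Fin n, (f (k : ℕ) : ℝ) with hSdef
  have hS0 : 0 ≤ S :=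
    Finset.sum_nonneg fun k _ => by exact_mod_cast hnn (k : ℕ)
  -- shift vectors
  let shift : Fin n → EuclideanSpace ℝ (Fin n) → EuclideanSpace ℝ (Fin n) :=
    fun k x => WithLp.toLp 2 (fun i => x (k + i))
  have hshift_norm : ∀ (k : Fin n) (x : EuclideanSpace ℝ (Fin n)),
      ‖shift k x‖ = ‖x‖ := by
    intro k x
    rw [EuclideanSpace.norm_eq, EuclideanSpace.norm_eq]
    congr 1
    exact Fintype.sum_equiv (Equiv.addLeft k) _ _ (fun i => rfl)
  -- the matrix acts as a sum of shifts
  have hTx : ∀ x : EuclideanSpace ℝ (Fin n),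
      Matrix.toEuclideanLin M x = ∑ k : Fin n, (f (k : ℕ) : ℝ) • shift k x := by
    intro x
    rw [Matrix.toEuclideanLin_apply]
    ext i
    have hsum_apply : (∑ k : Fin n, (f (k : ℕ) : ℝ) • shift k x) i
        = ∑ k : Fin n, (f (k : ℕ) : ℝ) * x (k + i) := by
      have h1 : (WithLp.linearEquiv 2 ℝ (Fin n → ℝ)) (∑ k : Fin n, (f (k : ℕ) : ℝ) • shift k x)
          = ∑ k : Fin n, (f (k : ℕ) : ℝ) • (WithLp.linearEquiv 2 ℝ (Fin n → ℝ)) (shift k x) := by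
        rw [map_sum]
        simp
      refine (congrFun h1 i).trans ?_
      rw [Finset.sum_apply]
      rfl
    rw [hsum_apply]
    show (Matrix.mulVec M ((WithLp.equiv 2 (Fin n → ℝ)) x)) i = _
    simp only [Matrix.mulVec, dotProduct, hM, Matrix.of_apply]
    refine (Fintype.sum_equiv (Equiv.addRight i)
      (fun k => (f (k : ℕ) : ℝ) * x (k + i)) _ (fun k => ?_)).symm
    simp [Equiv.addRight, add_sub_cancel_right]
  -- norm equals the row sum S
  have hnorm : ‖M‖ = S := by
    rw [Matrix.l2_opNorm_def]
    refine ContinuousLinearMap.opNorm_eq_of_bounds hS0 (fun x => ?_) (fun N hN h => ?_)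
    · rw [LinearEquiv.trans_apply, LinearMap.coe_toContinuousLinearMap', hTx]
      calc ‖∑ k : Fin n, (f (k : ℕ) : ℝ) • shift k x‖
          ≤ ∑ k : Fin n, ‖(f (k : ℕ) : ℝ) • shift k x‖ := norm_sum_le _ _
        _ = ∑ k : Fin n, (f (k : ℕ) : ℝ) * ‖x‖ := by
            refine Finset.sum_congr rfl fun k _ => ?_
            rw [norm_smul, hshift_norm, Real.norm_eq_abs,
              abs_of_nonneg (by exact_mod_cast hnn (k : ℕ))]
        _ = S * ‖x‖ := by rw [← Finset.sum_mul]
    · -- lower bound via the all-ones vector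
      let x₀ : EuclideanSpace ℝ (Fin n) := (WithLp.equiv 2 (Fin n → ℝ)).symm (fun _ => 1)
      have hx₀norm : ‖x₀‖ = Real.sqrt n := by
        rw [EuclideanSpace.norm_eq]
        have hx1 : ∀ j : Fin n, x₀ j = 1 := fun j => rfl
        simp [hx1]
      have hx₀pos : 0 < ‖x₀‖ := by
        rw [hx₀norm]
        exact Real.sqrt_pos.mpr (by exact_mod_cast Nat.lt_of_lt_of_le Nat.zero_lt_one hn)
      have hTx₀ : (Matrix.toEuclideanLin.trans LinearMap.toContinuousLinearMap M) x₀
          = S • x₀ := by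
        rw [LinearEquiv.trans_apply, LinearMap.coe_toContinuousLinearMap', hTx]
        have : ∀ k : Fin n, shift k x₀ = x₀ := fun k => rfl
        simp only [this]
        rw [← Finset.sum_smul]
      have := h x₀
      rw [hTx₀, norm_smul, Real.norm_eq_abs, abs_of_nonneg hS0] at this
      exact le_of_mul_le_mul_right this hx₀pos
  -- the summation identity
  have hkey : ∀ m, 1 ≤ m →
      (p + q - 1) * (∑ k ∈ Finset.range m, f k) = f m + q * f (m - 1) - 1 := by
    intro m hm
    induction m, hm using Nat.le_induction with
    | base => simp [hf0, hf1]
    | succ m hm ih =>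
      obtain ⟨m', rfl⟩ : ∃ m', m = m' + 1 := ⟨m - 1, by omega⟩
      rw [Finset.sum_range_succ, mul_add, ih]
      have hrec := hfrec m'
      simp only [Nat.add_sub_cancel] at *
      ring_nf
      ring_nf at hrec
      linarith [hrec]
  have hSsum : S = ∑ k ∈ Finset.range n, (f k : ℝ) := by
    rw [hSdef, Finset.sum_range fun k => (f k : ℝ)]
  have hcast : ((p : ℝ) + q - 1) * S = (f n : ℝ) + q * f (n - 1) - 1 := by
    rw [hSsum]
    exact_mod_cast hkey n hn
  have hpq : (p : ℝ) + q - 1 ≠ 0 := by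
    have : (1 : ℝ) ≤ p := by exact_mod_cast hp
    have : (1 : ℝ) ≤ q := by exact_mod_cast hq
    nlinarith
  rw [hnorm, eq_div_iff hpq]
  linarith [hcast]
end

section
/- Let p, q ≥ 1 be integers and (l̃_n) defined by l̃₀ = 2, l̃₁ = p, l̃_n = p·l̃_{n−1} + q·l̃_{n−2}. Then the spectral norm of the circulant matrix C(l̃₀, …, l̃_{n−1}) equals (l̃_n + q·l̃_{n−1} + p − 2) / (p + q − 1). -/
open scoped Matrix.Norms.L2Operator

private lemma lucas_pos (p q : ℤ) (hp : 1 ≤ p) (hq : 1 ≤ q)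
    (l : ℕ → ℤ) (hl0 : l 0 = 2) (hl1 : l 1 = p)
    (hlrec : ∀ m : ℕ, l (m + 2) = p * l (m + 1) + q * l m) :
    ∀ k, 1 ≤ l k := by
  have h : ∀ k, 1 ≤ l k ∧ 1 ≤ l (k + 1) := by
    intro k
    induction k with
    | zero => exact ⟨by omega, by rw [zero_add, hl1]; exact hp⟩
    | succ m ih =>
      refine ⟨ih.2, ?_⟩
      rw [hlrec]
      nlinarith [ih.1, ih.2]
  exact fun k => (h k).1

private lemma lucas_sum (p q : ℤ) (l : ℕ → ℤ) (hl0 : l 0 = 2) (hl1 : l 1 = p)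
    (hlrec : ∀ m : ℕ, l (m + 2) = p * l (m + 1) + q * l m) :
    ∀ m : ℕ, (p + q - 1) * (∑ k ∈ Finset.range (m + 1), l k) = l (m + 1) + q * l m + p - 2 := by
  intro m
  induction m with
  | zero => simp [hl0, hl1]; ring
  | succ m ih =>
    rw [Finset.sum_range_succ, mul_add, ih, hlrec]
    ring

theorem spectral_norm_circulant_generalized_lucas
    (p q : ℤ) (hp : 1 ≤ p) (hq : 1 ≤ q)
    (l : ℕ → ℤ) (hl0 : l 0 = 2) (hl1 : l 1 = p)
    (hlrec : ∀ m : ℕ, l (m + 2) = p * l (m + 1) + q * l m)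
    (n : ℕ) (hn : 1 ≤ n) :
    ‖(Matrix.of fun i j : Fin n => (l ((j - i : Fin n) : ℕ) : ℝ))‖ =
      ((l n : ℝ) + q * l (n - 1) + p - 2) / (p + q - 1) := by
  have hpos := lucas_pos p q hp hq l hl0 hl1 hlrec
  haveI : NeZero n := ⟨by omega⟩
  set A : Matrix (Fin n) (Fin n) ℝ :=
    Matrix.of fun i j : Fin n => (l ((j - i : Fin n) : ℕ) : ℝ) with hA
  have hAnn : ∀ i j, (0 : ℝ) ≤ A i j := by
    intro i j
    have := hpos ((j - i : Fin n) : ℕ)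
    simp only [hA, Matrix.of_apply]
    exact_mod_cast by linarith
  set S : ℝ := ∑ k ∈ Finset.range n, (l k : ℝ) with hS
  have hS0 : 0 ≤ S := by
    apply Finset.sum_nonneg
    intro k _
    have := hpos k
    exact_mod_cast by linarith
  have hUnivS : ∑ k : Fin n, (l (k : ℕ) : ℝ) = S := by
    rw [hS, ← Fin.sum_univ_eq_sum_range]
  have hrow : ∀ i : Fin n, ∑ j : Fin n, A i j = S := by
    intro i
    rw [← hUnivS]
    apply Fintype.sum_equiv (Equiv.subRight i)
    intro k
    simp [hA, Equiv.subRight]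
  have hcol : ∀ j : Fin n, ∑ i : Fin n, A i j = S := by
    intro j
    rw [← hUnivS]
    apply Fintype.sum_equiv (Equiv.subLeft j)
    intro k
    simp [hA, Equiv.subLeft]
  -- components of the image of a vector
  have happly : ∀ (x : EuclideanSpace ℝ (Fin n)) (i : Fin n),
      ((Matrix.toEuclideanLin ≪≫ₗ LinearMap.toContinuousLinearMap) A x) i
        = ∑ j : Fin n, A i j * x j := by
    intro x i
    rfl
  have hnorm : ‖A‖ = S := by
    rw [Matrix.l2_opNorm_def]
    apply le_antisymm
    · apply ContinuousLinearMap.opNorm_le_bound _ hS0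
      intro x
      rw [EuclideanSpace.norm_eq, EuclideanSpace.norm_eq]
      have key : ∑ i : Fin n, (∑ j : Fin n, A i j * x j) ^ 2
          ≤ S ^ 2 * ∑ j : Fin n, (x j) ^ 2 := by
        have step : ∀ i : Fin n, (∑ j : Fin n, A i j * x j) ^ 2
            ≤ S * ∑ j : Fin n, A i j * (x j) ^ 2 := by
          intro i
          have := Finset.sum_sq_le_sum_mul_sum_of_sq_eq_mul Finset.univ
            (r := fun j => A i j * x j) (f := fun j => A i j)
            (g := fun j => A i j * (x j) ^ 2)
            (fun j _ => hAnn i j)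
            (fun j _ => mul_nonneg (hAnn i j) (sq_nonneg _))
            (fun j _ => by ring)
          rwa [hrow i] at this
        calc ∑ i : Fin n, (∑ j : Fin n, A i j * x j) ^ 2
            ≤ ∑ i : Fin n, S * ∑ j : Fin n, A i j * (x j) ^ 2 :=
              Finset.sum_le_sum fun i _ => step i
          _ = S * ∑ j : Fin n, (∑ i : Fin n, A i j) * (x j) ^ 2 := by
              rw [← Finset.mul_sum, Finset.sum_comm]
              congr 1
              exact Finset.sum_congr rfl fun j _ => by rw [Finset.sum_mul]
          _ = S ^ 2 * ∑ j : Fin n, (x j) ^ 2 := by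
              simp_rw [hcol]
              rw [← Finset.mul_sum]
              ring
      calc Real.sqrt (∑ i : Fin n, ‖((Matrix.toEuclideanLin ≪≫ₗ
              LinearMap.toContinuousLinearMap) A x) i‖ ^ 2)
          = Real.sqrt (∑ i : Fin n, (∑ j : Fin n, A i j * x j) ^ 2) := by
            congr 1
            exact Finset.sum_congr rfl fun i _ => by rw [happly, Real.norm_eq_abs, sq_abs]
        _ ≤ Real.sqrt (S ^ 2 * ∑ j : Fin n, (x j) ^ 2) := Real.sqrt_le_sqrt key
        _ = S * Real.sqrt (∑ j : Fin n, (x j) ^ 2) := by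
            rw [Real.sqrt_mul (sq_nonneg S), Real.sqrt_sq hS0]
        _ = S * Real.sqrt (∑ j : Fin n, ‖x j‖ ^ 2) := by
            congr 2
            exact Finset.sum_congr rfl fun j _ => by rw [Real.norm_eq_abs, sq_abs]
    · -- lower bound via constant vector
      set y : EuclideanSpace ℝ (Fin n) := (WithLp.equiv 2 (Fin n → ℝ)).symm (fun _ => 1) with hy
      have hy_comp : ∀ i : Fin n, y i = 1 := fun i => rfl
      have hAy : (Matrix.toEuclideanLin ≪≫ₗ LinearMap.toContinuousLinearMap) A y = S • y := by
        ext i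
        rw [happly]
        simp only [hy_comp, mul_one, PiLp.smul_apply, smul_eq_mul]
        exact hrow i
      have hyn : ‖y‖ = Real.sqrt n := by
        rw [EuclideanSpace.norm_eq]
        simp [hy_comp]
      have hyn0 : 0 < ‖y‖ := by
        rw [hyn]
        apply Real.sqrt_pos.2
        exact_mod_cast by omega
      have hle := ContinuousLinearMap.le_opNorm
        ((Matrix.toEuclideanLin ≪≫ₗ LinearMap.toContinuousLinearMap) A) y
      rw [hAy, norm_smul, Real.norm_eq_abs, abs_of_nonneg hS0] at hle
      exact le_of_mul_le_mul_right hle hyn0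
  -- arithmetic
  rw [hnorm]
  obtain ⟨m, rfl⟩ : ∃ m, n = m + 1 := ⟨n - 1, by omega⟩
  have hsum := lucas_sum p q l hl0 hl1 hlrec m
  have hdenom : (p : ℝ) + q - 1 ≠ 0 := by
    have : (2 : ℝ) ≤ (p : ℝ) + q := by exact_mod_cast by omega
    linarith
  rw [eq_div_iff hdenom]
  simp only [Nat.add_sub_cancel]
  have : S = ((∑ k ∈ Finset.range (m + 1), l k : ℤ) : ℝ) := by
    rw [hS]; push_cast; ring
  rw [this]
  have := congrArg (fun z : ℤ => (z : ℝ)) hsum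
  push_cast at this ⊢
  linarith
end

section
/- Let p, q ≥ 1 be integers, b = 1, and a ≥ 0 an integer, with (h_n) the Horadam sequence h₀ = a, h₁ = 1, h_n = p·h_{n−1} + q·h_{n−2}. Then the spectral norm of C(h₀, …, h_{n−1}) equals (h_n + q·h_{n−1} + (p−1)·a − 1) / (p + q − 1). -/
open scoped Matrix.Norms.L2Operator

open Finset in
lemma aux_l2_opNorm_le {n : ℕ} (A : Matrix (Fin n) (Fin n) ℝ) (S : ℝ) (hS : 0 ≤ S)
    (hA : ∀ i j, 0 ≤ A i j) (hrow : ∀ i, ∑ j, A i j = S) (hcol : ∀ j, ∑ i, A i j = S) :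
    ‖A‖ ≤ S := by
  rw [Matrix.l2_opNorm_def]
  refine ContinuousLinearMap.opNorm_le_bound _ hS fun x => ?_
  have hx : ∀ y : EuclideanSpace ℝ (Fin n), ‖y‖ = Real.sqrt (∑ i, (y i) ^ 2) := by
    intro y
    rw [EuclideanSpace.norm_eq]
    congr 1
    exact Finset.sum_congr rfl fun i _ => by rw [Real.norm_eq_abs, sq_abs]
  rw [hx, hx]
  simp only [LinearEquiv.trans_apply, LinearMap.coe_toContinuousLinearMap',
    Matrix.toEuclideanLin_apply, PiLp.toLp_apply, Matrix.mulVec, dotProduct]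
  have key : ∑ i, (∑ j, A i j * x j) ^ 2 ≤ S ^ 2 * ∑ j, (x j) ^ 2 := by
    have step : ∀ i : Fin n, (∑ j, A i j * x j) ^ 2 ≤ S * ∑ j, A i j * (x j) ^ 2 := by
      intro i
      have := Finset.sum_sq_le_sum_mul_sum_of_sq_eq_mul Finset.univ
        (r := fun j => A i j * x j) (f := fun j => A i j) (g := fun j => A i j * (x j) ^ 2)
        (fun j _ => hA i j) (fun j _ => mul_nonneg (hA i j) (sq_nonneg _))
        (fun j _ => by ring)
      calc (∑ j, A i j * x j) ^ 2 ≤ (∑ j, A i j) * ∑ j, A i j * (x j) ^ 2 := this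
        _ = S * ∑ j, A i j * (x j) ^ 2 := by rw [hrow i]
    calc ∑ i, (∑ j, A i j * x j) ^ 2 ≤ ∑ i : Fin n, S * ∑ j, A i j * (x j) ^ 2 :=
          Finset.sum_le_sum fun i _ => step i
      _ = S * ∑ j, (∑ i, A i j) * (x j) ^ 2 := by
          rw [← Finset.mul_sum, Finset.sum_comm]
          congr 1
          exact Finset.sum_congr rfl fun j _ => by rw [Finset.sum_mul]
      _ = S ^ 2 * ∑ j, (x j) ^ 2 := by
          rw [Finset.mul_sum, Finset.mul_sum]
          refine Finset.sum_congr rfl fun j _ => ?_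
          rw [hcol j]; ring
  calc Real.sqrt (∑ i, (∑ j, A i j * x j) ^ 2)
      ≤ Real.sqrt (S ^ 2 * ∑ j, (x j) ^ 2) := Real.sqrt_le_sqrt key
    _ = S * Real.sqrt (∑ j, (x j) ^ 2) := by
        rw [Real.sqrt_mul (sq_nonneg S), Real.sqrt_sq hS]

open Finset in
lemma aux_le_l2_opNorm {n : ℕ} (hn : 1 ≤ n) (A : Matrix (Fin n) (Fin n) ℝ) (S : ℝ)
    (hrow : ∀ i, ∑ j, A i j = S) : S ≤ ‖A‖ := by
  have hx : ∀ y : EuclideanSpace ℝ (Fin n), ‖y‖ = Real.sqrt (∑ i, (y i) ^ 2) := by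
    intro y
    rw [EuclideanSpace.norm_eq]
    congr 1
    exact Finset.sum_congr rfl fun i _ => by rw [Real.norm_eq_abs, sq_abs]
  have h1 := Matrix.l2_opNorm_mulVec A ((WithLp.equiv 2 (Fin n → ℝ)).symm (fun _ => 1))
  have hmv : A.mulVec ((WithLp.equiv 2 (Fin n → ℝ)).symm fun _ => (1:ℝ)) = fun _ => S := by
    funext i
    simp only [Matrix.mulVec, dotProduct]
    simpa using hrow i
  rw [hx, hx] at h1
  have hsum1 : ∀ i : Fin n,
      (((WithLp.equiv 2 (Fin n → ℝ)).symm fun _ => (1:ℝ)) i) ^ 2 = 1 := fun i => one_pow 2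
  have hsum2 : ∀ i : Fin n,
      (((EuclideanSpace.equiv (Fin n) ℝ).symm <|
        A.mulVec ((WithLp.equiv 2 (Fin n → ℝ)).symm fun _ => (1:ℝ))) i) ^ 2 = S ^ 2 := by
    intro i
    have : (A.mulVec ((WithLp.equiv 2 (Fin n → ℝ)).symm fun _ => (1:ℝ))) i = S := by
      rw [hmv]
    simpa using congrArg (· ^ 2) this
  rw [Finset.sum_congr rfl fun i _ => hsum2 i, Finset.sum_congr rfl fun i _ => hsum1 i] at h1
  simp only [Finset.sum_const, Finset.card_univ, Fintype.card_fin, nsmul_eq_mul,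
    mul_one] at h1
  have hn' : (0:ℝ) < Real.sqrt n := Real.sqrt_pos.mpr (by exact_mod_cast hn)
  have hleft : Real.sqrt (n * S ^ 2) = |S| * Real.sqrt n := by
    rw [mul_comm, Real.sqrt_mul (sq_nonneg S), Real.sqrt_sq_eq_abs]
  rw [hleft] at h1
  have : |S| ≤ ‖A‖ := le_of_mul_le_mul_right (by linarith [h1]) hn'
  exact (le_abs_self S).trans this


lemma aux_horadam_nonneg (a p q : ℤ) (ha : 0 ≤ a) (hp : 1 ≤ p) (hq : 1 ≤ q)
    (h : ℕ → ℤ) (h0 : h 0 = a) (h1 : h 1 = 1)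
    (hrec : ∀ m : ℕ, h (m + 2) = p * h (m + 1) + q * h m) :
    ∀ k, 0 ≤ h k := by
  have key : ∀ k, 0 ≤ h k ∧ 0 ≤ h (k + 1) := by
    intro k
    induction k with
    | zero => exact ⟨h0 ▸ ha, h1 ▸ one_pos.le⟩
    | succ m ih =>
      refine ⟨ih.2, ?_⟩
      rw [hrec m]
      have := mul_nonneg (le_trans zero_le_one hp) ih.2
      have := mul_nonneg (le_trans zero_le_one hq) ih.1
      linarith
  exact fun k => (key k).1

lemma aux_horadam_sum (a p q : ℤ) (h : ℕ → ℤ) (h0 : h 0 = a) (h1 : h 1 = 1)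
    (hrec : ∀ m : ℕ, h (m + 2) = p * h (m + 1) + q * h m) :
    ∀ n, 1 ≤ n → (p + q - 1) * ∑ k ∈ Finset.range n, h k
      = h n + q * h (n - 1) + (p - 1) * a - 1 := by
  intro n hn
  induction n, hn using Nat.le_induction with
  | base => simp [h0, h1]; ring
  | succ m hm ih =>
    obtain ⟨l, rfl⟩ : ∃ l, m = l + 1 := ⟨m - 1, by omega⟩
    rw [Finset.sum_range_succ, mul_add, ih]
    simp only [Nat.add_sub_cancel]
    rw [hrec l]
    ring

theorem spectral_norm_circulant_horadam_b_one
    (a p q : ℤ) (ha : 0 ≤ a) (hp : 1 ≤ p) (hq : 1 ≤ q)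
    (h : ℕ → ℤ) (h0 : h 0 = a) (h1 : h 1 = 1)
    (hrec : ∀ m : ℕ, h (m + 2) = p * h (m + 1) + q * h m)
    (n : ℕ) (hn : 1 ≤ n) :
    ‖(Matrix.of fun i j : Fin n => (h ((j - i : Fin n) : ℕ) : ℝ))‖ =
      ((h n : ℝ) + q * h (n - 1) + (p - 1) * a - 1) / (p + q - 1) := by
  haveI : NeZero n := ⟨by omega⟩
  have hnonneg := aux_horadam_nonneg a p q ha hp hq h h0 h1 hrec
  set A : Matrix (Fin n) (Fin n) ℝ :=
    Matrix.of fun i j : Fin n => (h ((j - i : Fin n) : ℕ) : ℝ) with hAdef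
  set S : ℝ := ((∑ k ∈ Finset.range n, h k : ℤ) : ℝ) with hSdef
  have hS0 : 0 ≤ S := by
    rw [hSdef]
    exact_mod_cast Finset.sum_nonneg fun k _ => hnonneg k
  have hfin : ∑ k : Fin n, ((h k.val : ℤ) : ℝ) = S := by
    rw [hSdef]
    push_cast
    exact Fin.sum_univ_eq_sum_range (fun k => ((h k : ℤ) : ℝ)) n
  have hrow : ∀ i : Fin n, ∑ j, A i j = S := by
    intro i
    rw [← hfin]
    exact Fintype.sum_equiv (Equiv.subRight i) _ _ fun j => rfl
  have hcol : ∀ j : Fin n, ∑ i, A i j = S := by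
    intro j
    rw [← hfin]
    exact Fintype.sum_equiv (Equiv.subLeft j) _ _ fun i => rfl
  have hA : ∀ i j, 0 ≤ A i j := fun i j => by
    simpa [hAdef] using (hnonneg _)
  have hnorm : ‖A‖ = S :=
    le_antisymm (aux_l2_opNorm_le A S hS0 hA hrow hcol) (aux_le_l2_opNorm hn A S hrow)
  rw [hnorm]
  have hsum := aux_horadam_sum a p q h h0 h1 hrec n hn
  have hpq : ((p : ℝ) + q - 1) ≠ 0 := by
    have : (1:ℤ) ≤ p + q - 1 := by omega
    have : (1:ℝ) ≤ (p:ℝ) + q - 1 := by exact_mod_cast this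
    linarith
  rw [eq_div_iff hpq, hSdef]
  have := congrArg (fun z : ℤ => (z : ℝ)) hsum
  push_cast at this ⊢
  linarith [this]
end
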